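/- Let A be a unital C*-algebra, δ > 0, R ≥ 0, and let H₁, H₂ be selfadjoint elements of A with ‖Hᵢ‖ ≤ R and whose real spectra are contained in {x : |x| ≥ δ}. Let P⁺(Hᵢ) denote the continuous functional calculus of Hᵢ applied to the indicator function of (0,∞) (which is continuous on the spectrum of Hᵢ). Then each P⁺(Hᵢ) is a selfadjoint idempotent and ‖ P⁺(H₁) − P⁺(H₂) ‖ ≤ (1/2)(1/δ + R²/δ³) ‖H₁ − H₂‖. -/

import Mathlib

section Aux

variable {A : Type*} [CStarAlgebra A]

/-- Sylvester-type bound: if `a, b` are selfadjoint with spectra in `[δ, R]`, then for any `D`,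
`‖D‖ ≤ ‖a * D + D * b‖ / (2 * δ)`. Proved via the resolvent trick
`D = (a + λ)⁻¹ * (a*D + D*b) + (a + λ)⁻¹ * D * (λ - b)` with `λ = max R δ`. -/
lemma sylvester_norm_le {δ R : ℝ} (hδ : 0 < δ)
    {a b : A} (ha : IsSelfAdjoint a) (hb : IsSelfAdjoint b)
    (hsa : spectrum ℝ a ⊆ Set.Icc δ R) (hsb : spectrum ℝ b ⊆ Set.Icc δ R)
    (D : A) : ‖D‖ ≤ ‖a * D + D * b‖ / (2 * δ) := by
  set l : ℝ := max R δ with hl_def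
  have hδl : δ ≤ l := le_max_right _ _
  have hl : 0 < l := lt_of_lt_of_le hδ hδl
  have hsa' : spectrum ℝ a ⊆ Set.Icc δ l :=
    hsa.trans (Set.Icc_subset_Icc_right (le_max_left _ _))
  have hsb' : spectrum ℝ b ⊆ Set.Icc δ l :=
    hsb.trans (Set.Icc_subset_Icc_right (le_max_left _ _))
  have hcont1 : ContinuousOn (fun x : ℝ => x + l) (spectrum ℝ a) := by fun_prop
  have hcont : ContinuousOn (fun x : ℝ => (x + l)⁻¹) (spectrum ℝ a) := by
    refine ContinuousOn.inv₀ (by fun_prop) fun x hx => ?_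
    have h1 := (hsa' hx).1
    exact (show (0:ℝ) < x + l by linarith).ne'
  set u : A := cfc (fun x : ℝ => (x + l)⁻¹) a with hu_def
  set l' : A := algebraMap ℝ A l with hl'_def
  have hal : a + l' = cfc (fun x : ℝ => x + l) a := by
    rw [cfc_add_const l (fun x : ℝ => x) a (by fun_prop) ha, cfc_id' ℝ a]
  have hu1 : u * (a + l') = 1 := by
    rw [hal, hu_def, ← cfc_mul _ _ a hcont hcont1]
    have : (spectrum ℝ a).EqOn (fun x => (x + l)⁻¹ * (x + l)) (fun _ => (1 : ℝ)) := by
      intro x hx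
      have h1 := (hsa' hx).1
      have hne : x + l ≠ 0 := (show (0:ℝ) < x + l by linarith).ne'
      simp [inv_mul_cancel₀ hne]
    rw [cfc_congr this, cfc_const_one ℝ a]
  have hnu : ‖u‖ ≤ (δ + l)⁻¹ := by
    refine norm_cfc_le (by positivity) fun x hx => ?_
    have h1 := (hsa' hx).1
    rw [Real.norm_eq_abs, abs_inv, abs_of_pos (show (0:ℝ) < x + l by linarith)]
    exact inv_anti₀ (by linarith) (by linarith)
  have hv : l' - b = cfc (fun x : ℝ => l - x) b := by
    rw [cfc_sub (fun _ : ℝ => l) (fun x : ℝ => x) b (by fun_prop) (by fun_prop),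
      cfc_const l b hb, cfc_id' ℝ b]
  have hnv : ‖l' - b‖ ≤ l - δ := by
    rw [hv]
    refine norm_cfc_le (by linarith) fun x hx => ?_
    have h1 := (hsb' hx).1
    have h2 := (hsb' hx).2
    rw [Real.norm_eq_abs, abs_of_nonneg (by linarith)]
    linarith
  have hc : u * D * l' = u * (l' * D) := by
    rw [mul_assoc, (Algebra.commutes l D).symm]
  have key : D = u * (a * D + D * b) + u * D * (l' - b) := by
    have e1 : u * (a * D + D * b) + u * D * (l' - b)
        = u * (a + l') * D + (u * D * l' - u * (l' * D)) := by noncomm_ring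
    rw [e1, hc, sub_self, add_zero, hu1, one_mul]
  have hpos : (0 : ℝ) < δ + l := by linarith
  have hineq : ‖D‖ ≤ (δ + l)⁻¹ * ‖a * D + D * b‖ + (δ + l)⁻¹ * ‖D‖ * (l - δ) := by
    calc ‖D‖ = ‖u * (a * D + D * b) + u * D * (l' - b)‖ := by rw [← key]
    _ ≤ ‖u * (a * D + D * b)‖ + ‖u * D * (l' - b)‖ := norm_add_le _ _
    _ ≤ ‖u‖ * ‖a * D + D * b‖ + ‖u‖ * ‖D‖ * ‖l' - b‖ := by
        gcongr
        · exact norm_mul_le _ _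
        · exact le_trans (norm_mul_le _ _) (by gcongr; exact norm_mul_le _ _)
    _ ≤ (δ + l)⁻¹ * ‖a * D + D * b‖ + (δ + l)⁻¹ * ‖D‖ * (l - δ) := by
        gcongr
  rw [le_div_iff₀ (by positivity)]
  have h4 := mul_le_mul_of_nonneg_left hineq hpos.le
  have h5 : (δ + l) * ((δ + l)⁻¹ * ‖a * D + D * b‖ + (δ + l)⁻¹ * ‖D‖ * (l - δ))
      = ‖a * D + D * b‖ + ‖D‖ * (l - δ) := by
    field_simp
  rw [h5] at h4
  nlinarith [norm_nonneg D]

lemma indicator_eqOn {s : Set ℝ} (hs : ∀ x ∈ s, x ≠ 0) :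
    Set.EqOn (fun x : ℝ => if 0 < x then (1 : ℝ) else 0)
      (fun x : ℝ => (2⁻¹ : ℝ) • (1 + x * |x|⁻¹)) s := by
  intro x hx
  rcases (hs x hx).lt_or_gt with h | h
  · have hne : x ≠ 0 := h.ne
    simp only [if_neg (not_lt.mpr h.le), abs_of_neg h, smul_eq_mul, inv_neg, mul_neg,
      mul_inv_cancel₀ hne]
    norm_num
  · simp only [if_pos h, abs_of_pos h, smul_eq_mul, mul_inv_cancel₀ h.ne']
    norm_num

end Aux

/-- Let `A` be a unital C*-algebra, `δ > 0`, `R ≥ 0`, and `H₁, H₂` selfadjoint elements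
with `‖Hᵢ‖ ≤ R` whose real spectra are contained in `{x : |x| ≥ δ}`. Let
`P⁺(Hᵢ)` be the continuous functional calculus of `Hᵢ` applied to the indicator function
of `(0,∞)`. Then each `P⁺(Hᵢ)` is a selfadjoint idempotent and
`‖P⁺(H₁) − P⁺(H₂)‖ ≤ (1/2)(1/δ + R²/δ³) ‖H₁ − H₂‖`. -/
theorem norm_posSpectralProjection_sub_le {A : Type*} [CStarAlgebra A]
    (δ R : ℝ) (hδ : 0 < δ) (hR : 0 ≤ R)
    (H₁ H₂ : A) (h₁ : IsSelfAdjoint H₁) (h₂ : IsSelfAdjoint H₂)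
    (hn₁ : ‖H₁‖ ≤ R) (hn₂ : ‖H₂‖ ≤ R)
    (hs₁ : spectrum ℝ H₁ ⊆ {x : ℝ | δ ≤ |x|}) (hs₂ : spectrum ℝ H₂ ⊆ {x : ℝ | δ ≤ |x|}) :
    (IsSelfAdjoint (cfc (fun x : ℝ => if 0 < x then (1 : ℝ) else 0) H₁) ∧
      IsIdempotentElem (cfc (fun x : ℝ => if 0 < x then (1 : ℝ) else 0) H₁)) ∧
    (IsSelfAdjoint (cfc (fun x : ℝ => if 0 < x then (1 : ℝ) else 0) H₂) ∧
      IsIdempotentElem (cfc (fun x : ℝ => if 0 < x then (1 : ℝ) else 0) H₂)) ∧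
    ‖cfc (fun x : ℝ => if 0 < x then (1 : ℝ) else 0) H₁ -
        cfc (fun x : ℝ => if 0 < x then (1 : ℝ) else 0) H₂‖ ≤
      (1 / 2) * (1 / δ + R ^ 2 / δ ^ 3) * ‖H₁ - H₂‖ := by
  set g : ℝ → ℝ := fun x => if 0 < x then (1 : ℝ) else 0 with hg_def
  obtain hA | hA := subsingleton_or_nontrivial A
  · refine ⟨⟨Subsingleton.elim _ _, Subsingleton.elim _ _⟩,
      ⟨Subsingleton.elim _ _, Subsingleton.elim _ _⟩, ?_⟩
    rw [Subsingleton.elim (cfc g H₁ - cfc g H₂) 0, Subsingleton.elim (H₁ - H₂) 0, norm_zero]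
    positivity
  -- basic facts about each Hᵢ
  have hne₁ : ∀ x ∈ spectrum ℝ H₁, x ≠ 0 := fun x hx h0 => by
    have := hs₁ hx; rw [Set.mem_setOf_eq, h0, abs_zero] at this; linarith
  have hne₂ : ∀ x ∈ spectrum ℝ H₂, x ≠ 0 := fun x hx h0 => by
    have := hs₂ hx; rw [Set.mem_setOf_eq, h0, abs_zero] at this; linarith
  -- continuity facts
  have habsinv : ∀ (H : A), (∀ x ∈ spectrum ℝ H, x ≠ 0) →
      ContinuousOn (fun x : ℝ => |x|⁻¹) (spectrum ℝ H) := fun H hH =>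
    ContinuousOn.inv₀ (continuous_abs.continuousOn) fun x hx => abs_ne_zero.mpr (hH x hx)
  have hformula : ∀ (H : A), (∀ x ∈ spectrum ℝ H, x ≠ 0) →
      ContinuousOn (fun x : ℝ => (2⁻¹ : ℝ) • (1 + x * |x|⁻¹)) (spectrum ℝ H) := by
    intro H hH
    exact (continuousOn_const.add (continuousOn_id.mul (habsinv H hH))).const_smul (2⁻¹ : ℝ)
  have hgcont : ∀ (H : A), (∀ x ∈ spectrum ℝ H, x ≠ 0) →
      ContinuousOn g (spectrum ℝ H) := fun H hH =>
    (hformula H hH).congr (indicator_eqOn hH)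
  -- selfadjointness and idempotency
  have hsa : ∀ (H : A), IsSelfAdjoint (cfc g H) := fun H => cfc_predicate g H
  have hidem : ∀ (H : A), IsSelfAdjoint H → (∀ x ∈ spectrum ℝ H, x ≠ 0) →
      IsIdempotentElem (cfc g H) := by
    intro H hH hne
    unfold IsIdempotentElem
    rw [← cfc_mul g g H (hgcont H hne) (hgcont H hne)]
    refine cfc_congr fun x _ => ?_
    by_cases h : 0 < x <;> simp [hg_def, h]
  refine ⟨⟨hsa H₁, hidem H₁ h₁ hne₁⟩, ⟨hsa H₂, hidem H₂ h₂ hne₂⟩, ?_⟩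
  -- now the norm estimate
  set T₁ : A := cfc (fun x : ℝ => |x|⁻¹) H₁ with hT₁def
  set T₂ : A := cfc (fun x : ℝ => |x|⁻¹) H₂ with hT₂def
  set a₁ : A := cfc (fun x : ℝ => |x|) H₁ with ha₁def
  set a₂ : A := cfc (fun x : ℝ => |x|) H₂ with ha₂def
  -- P as an affine function of S = H * T
  have hP : ∀ (H : A), IsSelfAdjoint H → (∀ x ∈ spectrum ℝ H, x ≠ 0) →
      cfc g H = (2⁻¹ : ℝ) • (1 + H * cfc (fun x : ℝ => |x|⁻¹) H) := by
    intro H hH hne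
    rw [cfc_congr (indicator_eqOn hne),
      cfc_smul (2⁻¹ : ℝ) (fun x : ℝ => 1 + x * |x|⁻¹) H
        (continuousOn_const.add (continuousOn_id.mul (habsinv H hne))),
      cfc_const_add (1 : ℝ) (fun x : ℝ => x * |x|⁻¹) H
        (continuousOn_id.mul (habsinv H hne)) hH,
      cfc_mul (fun x : ℝ => x) (fun x : ℝ => |x|⁻¹) H (by fun_prop) (habsinv H hne), cfc_id' ℝ H]
    simp
  -- inverse identities
  have hTa : ∀ (H : A), IsSelfAdjoint H → (∀ x ∈ spectrum ℝ H, x ≠ 0) →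
      cfc (fun x : ℝ => |x|⁻¹) H * cfc (fun x : ℝ => |x|) H = 1 := by
    intro H hH hne
    rw [← cfc_mul _ _ H (habsinv H hne) (continuous_abs.continuousOn)]
    have : (spectrum ℝ H).EqOn (fun x => |x|⁻¹ * |x|) (fun _ => (1 : ℝ)) := fun x hx => by
      simp [inv_mul_cancel₀ (abs_ne_zero.mpr (hne x hx))]
    rw [cfc_congr this, cfc_const_one ℝ H]
  have haT : ∀ (H : A), IsSelfAdjoint H → (∀ x ∈ spectrum ℝ H, x ≠ 0) →
      cfc (fun x : ℝ => |x|) H * cfc (fun x : ℝ => |x|⁻¹) H = 1 := by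
    intro H hH hne
    rw [← cfc_mul _ _ H (continuous_abs.continuousOn) (habsinv H hne)]
    have : (spectrum ℝ H).EqOn (fun x => |x| * |x|⁻¹) (fun _ => (1 : ℝ)) := fun x hx => by
      simp [mul_inv_cancel₀ (abs_ne_zero.mpr (hne x hx))]
    rw [cfc_congr this, cfc_const_one ℝ H]
  -- |H|² = H²
  have hsq : ∀ (H : A), IsSelfAdjoint H →
      cfc (fun x : ℝ => |x|) H * cfc (fun x : ℝ => |x|) H = H * H := by
    intro H hH
    rw [← cfc_mul _ _ H (continuous_abs.continuousOn) (continuous_abs.continuousOn)]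
    have : (spectrum ℝ H).EqOn (fun x => |x| * |x|) (fun x => x * x) := fun x _ => by
      simp [abs_mul_abs_self]
    rw [cfc_congr this, cfc_mul (fun x : ℝ => x) (fun x : ℝ => x) H (by fun_prop) (by fun_prop), cfc_id' ℝ H]
  -- spectra of |Hᵢ|
  have hspec : ∀ (H : A), IsSelfAdjoint H → ‖H‖ ≤ R → spectrum ℝ H ⊆ {x : ℝ | δ ≤ |x|} →
      spectrum ℝ (cfc (fun x : ℝ => |x|) H) ⊆ Set.Icc δ R := by
    intro H hH hn hs
    rw [cfc_map_spectrum (fun x : ℝ => |x|) H hH (continuous_abs.continuousOn)]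
    rintro y ⟨x, hx, rfl⟩
    refine ⟨hs hx, ?_⟩
    have := spectrum.norm_le_norm_of_mem hx
    rw [Real.norm_eq_abs] at this
    linarith
  -- norm bounds on Tᵢ
  have hnT : ∀ (H : A), (∀ x ∈ spectrum ℝ H, x ≠ 0) → spectrum ℝ H ⊆ {x : ℝ | δ ≤ |x|} →
      ‖cfc (fun x : ℝ => |x|⁻¹) H‖ ≤ δ⁻¹ := by
    intro H hne hs
    refine norm_cfc_le (by positivity) fun x hx => ?_
    have h1 : δ ≤ |x| := hs hx
    rw [Real.norm_eq_abs, abs_inv, abs_abs]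
    exact inv_anti₀ hδ h1
  have hnT₁ : ‖T₁‖ ≤ δ⁻¹ := hnT H₁ hne₁ hs₁
  have hnT₂ : ‖T₂‖ ≤ δ⁻¹ := hnT H₂ hne₂ hs₂
  -- ‖H₁² - H₂²‖ ≤ 2 R ‖H₁ - H₂‖
  have hsqdiff : ‖H₁ * H₁ - H₂ * H₂‖ ≤ 2 * R * ‖H₁ - H₂‖ := by
    have e : H₁ * H₁ - H₂ * H₂ = H₁ * (H₁ - H₂) + (H₁ - H₂) * H₂ := by noncomm_ring
    calc ‖H₁ * H₁ - H₂ * H₂‖ = ‖H₁ * (H₁ - H₂) + (H₁ - H₂) * H₂‖ := by rw [e]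
    _ ≤ ‖H₁ * (H₁ - H₂)‖ + ‖(H₁ - H₂) * H₂‖ := norm_add_le _ _
    _ ≤ ‖H₁‖ * ‖H₁ - H₂‖ + ‖H₁ - H₂‖ * ‖H₂‖ := by
        gcongr
        · exact norm_mul_le _ _
        · exact norm_mul_le _ _
    _ ≤ R * ‖H₁ - H₂‖ + ‖H₁ - H₂‖ * R := by gcongr
    _ = 2 * R * ‖H₁ - H₂‖ := by ring
  -- key Sylvester bound: ‖|H₁| - |H₂|‖ ≤ ‖H₁² - H₂²‖ / (2δ)
  have habs : ‖a₁ - a₂‖ ≤ (2 * R * ‖H₁ - H₂‖) / (2 * δ) := by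
    have hC : a₁ * (a₁ - a₂) + (a₁ - a₂) * a₂ = H₁ * H₁ - H₂ * H₂ := by
      have : a₁ * (a₁ - a₂) + (a₁ - a₂) * a₂ = a₁ * a₁ - a₂ * a₂ := by noncomm_ring
      rw [this, hsq H₁ h₁, hsq H₂ h₂]
    have := sylvester_norm_le hδ (cfc_predicate _ H₁) (cfc_predicate _ H₂)
      (hspec H₁ h₁ hn₁ hs₁) (hspec H₂ h₂ hn₂ hs₂) (a₁ - a₂)
    rw [hC] at this
    calc ‖a₁ - a₂‖ ≤ ‖H₁ * H₁ - H₂ * H₂‖ / (2 * δ) := this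
    _ ≤ (2 * R * ‖H₁ - H₂‖) / (2 * δ) := by gcongr
  -- T₁ - T₂ = T₁ (a₂ - a₁) T₂
  have hTdiff : T₁ - T₂ = T₁ * (a₂ - a₁) * T₂ := by
    have e : T₁ * (a₂ - a₁) * T₂ = T₁ * (a₂ * T₂) - T₁ * a₁ * T₂ := by noncomm_ring
    rw [e, haT H₂ h₂ hne₂, hTa H₁ h₁ hne₁, mul_one, one_mul]
  have hnTdiff : ‖T₁ - T₂‖ ≤ δ⁻¹ * ((2 * R * ‖H₁ - H₂‖) / (2 * δ)) * δ⁻¹ := by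
    rw [hTdiff]
    calc ‖T₁ * (a₂ - a₁) * T₂‖ ≤ ‖T₁ * (a₂ - a₁)‖ * ‖T₂‖ := norm_mul_le _ _
    _ ≤ ‖T₁‖ * ‖a₂ - a₁‖ * ‖T₂‖ := by gcongr; exact norm_mul_le _ _
    _ ≤ δ⁻¹ * ((2 * R * ‖H₁ - H₂‖) / (2 * δ)) * δ⁻¹ := by
        have : ‖a₂ - a₁‖ = ‖a₁ - a₂‖ := by rw [← norm_neg]; congr 1; abel
        rw [this]
        gcongr
  -- difference of the projections
  have hPdiff : cfc g H₁ - cfc g H₂ = (2⁻¹ : ℝ) • (H₁ * T₁ - H₂ * T₂) := by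
    rw [hP H₁ h₁ hne₁, hP H₂ h₂ hne₂, ← smul_sub]
    congr 1
    abel
  have hSdiff : H₁ * T₁ - H₂ * T₂ = (H₁ - H₂) * T₁ + H₂ * (T₁ - T₂) := by noncomm_ring
  have hnS : ‖H₁ * T₁ - H₂ * T₂‖ ≤
      δ⁻¹ * ‖H₁ - H₂‖ + R * (δ⁻¹ * ((2 * R * ‖H₁ - H₂‖) / (2 * δ)) * δ⁻¹) := by
    rw [hSdiff]
    calc ‖(H₁ - H₂) * T₁ + H₂ * (T₁ - T₂)‖
        ≤ ‖(H₁ - H₂) * T₁‖ + ‖H₂ * (T₁ - T₂)‖ := norm_add_le _ _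
    _ ≤ ‖H₁ - H₂‖ * ‖T₁‖ + ‖H₂‖ * ‖T₁ - T₂‖ := by
        gcongr
        · exact norm_mul_le _ _
        · exact norm_mul_le _ _
    _ ≤ ‖H₁ - H₂‖ * δ⁻¹ + R * (δ⁻¹ * ((2 * R * ‖H₁ - H₂‖) / (2 * δ)) * δ⁻¹) := by
        gcongr
    _ = δ⁻¹ * ‖H₁ - H₂‖ + R * (δ⁻¹ * ((2 * R * ‖H₁ - H₂‖) / (2 * δ)) * δ⁻¹) := by ring
  calc ‖cfc g H₁ - cfc g H₂‖ = 2⁻¹ * ‖H₁ * T₁ - H₂ * T₂‖ := by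
        rw [hPdiff, norm_smul, Real.norm_eq_abs]
        norm_num
  _ ≤ 2⁻¹ * (δ⁻¹ * ‖H₁ - H₂‖ + R * (δ⁻¹ * ((2 * R * ‖H₁ - H₂‖) / (2 * δ)) * δ⁻¹)) := by
        gcongr
  _ = (1 / 2) * (1 / δ + R ^ 2 / δ ^ 3) * ‖H₁ - H₂‖ := by
        field_simp
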